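/- Let k be a positive integer and π a permutation of {1,...,k}. There exists a constant c_π such that for all n and m, any n×n 0-1 matrix with m ones contains at least m − c_π·n copies of the permutation matrix A_π. -/

import Mathlib

/-- The number of copies of the `k × k` permutation matrix `A_π` in the `n × n`
0-1 matrix `M`: pairs of strictly increasing row/column index tuples such that
`M` has a one at `(x i, y (π i))` for every `i`. -/
noncomputable def matCopies {k n : ℕ} (π : Equiv.Perm (Fin k))
    (M : Fin n → Fin n → Bool) : ℕ :=
  Nat.card {xy : (Fin k → Fin n) × (Fin k → Fin n) //
    StrictMono xy.1 ∧ StrictMono xy.2 ∧ ∀ i, M (xy.1 i) (xy.2 (π i)) = true}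

/-- The number of ones in a 0-1 matrix. -/
noncomputable def matOnes {n : ℕ} (M : Fin n → Fin n → Bool) : ℕ :=
  Nat.card {ij : Fin n × Fin n // M ij.1 ij.2 = true}

open Finset

namespace WeakSup

variable {k : ℕ} (π : Equiv.Perm (Fin k))

/-- `M` contains a copy of the permutation matrix of `π`. -/
def Contains {n : ℕ} (M : Fin n → Fin n → Bool) : Prop :=
  ∃ x y : Fin k → Fin n, StrictMono x ∧ StrictMono y ∧ ∀ i, M (x i) (y (π i)) = true

/-- The set of positions of ones. -/
def onesF {n : ℕ} (M : Fin n → Fin n → Bool) : Finset (Fin n × Fin n) :=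
  univ.filter fun p => M p.1 p.2 = true

lemma matOnes_eq {n : ℕ} (M : Fin n → Fin n → Bool) : matOnes M = (onesF M).card := by
  simp [matOnes, onesF, Nat.card_eq_fintype_card, Fintype.card_subtype]

/-- embedding of block coordinates -/
def emb (s q : ℕ) (I : Fin q) (r : Fin s) : Fin (s * q) :=
  ⟨(r : ℕ) + s * (I : ℕ), by
    have h1 : (r : ℕ) + s * I < s * (I + 1) := by have := r.isLt; ring_nf; omega
    have h2 : s * ((I : ℕ) + 1) ≤ s * q := Nat.mul_le_mul_left s I.isLt
    omega⟩

lemma emb_lt_of_lt {s q : ℕ} {I I' : Fin q} (r r' : Fin s) (h : I < I') :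
    emb s q I r < emb s q I' r' := by
  have h1 : (r : ℕ) + s * I < s * ((I : ℕ) + 1) := by have := r.isLt; ring_nf; omega
  have h2 : s * ((I : ℕ) + 1) ≤ s * (I' : ℕ) := Nat.mul_le_mul_left s h
  simp only [emb, Fin.lt_def]
  omega

lemma emb_lt_same {s q : ℕ} (J : Fin q) {c c' : Fin s} (h : c < c') :
    emb s q J c < emb s q J c' := by
  simp only [emb, Fin.lt_def]
  exact Nat.add_lt_add_right h _

lemma emb_surj {s q : ℕ} (hs : 0 < s) (i : Fin (s * q)) : ∃ I r, emb s q I r = i := by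
  have hq : (i : ℕ) / s < q := Nat.div_lt_of_lt_mul (by omega)
  refine ⟨⟨(i : ℕ) / s, hq⟩, ⟨(i : ℕ) % s, Nat.mod_lt _ hs⟩, ?_⟩
  simp only [emb]
  ext
  simp [Nat.mod_add_div]


section Blocks

variable {s q : ℕ} (M : Fin (s * q) → Fin (s * q) → Bool)

/-- ones of the block `(I, J)`, in block-local coordinates. -/
def blockS (I J : Fin q) : Finset (Fin s × Fin s) :=
  univ.filter fun p => M (emb s q I p.1) (emb s q J p.2) = true

def occR (I J : Fin q) : Finset (Fin s) := (blockS M I J).image Prod.fst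
def occC (I J : Fin q) : Finset (Fin s) := (blockS M I J).image Prod.snd

lemma blockS_card_le (I J : Fin q) :
    (blockS M I J).card ≤ (occR M I J).card * (occC M I J).card := by
  rw [← Finset.card_product]
  apply Finset.card_le_card
  intro p hp
  exact Finset.mem_product.mpr ⟨Finset.mem_image_of_mem _ hp, Finset.mem_image_of_mem _ hp⟩

lemma blockS_card_le' (I J : Fin q) : (blockS M I J).card ≤ s * s := by
  calc (blockS M I J).card ≤ (univ : Finset (Fin s × Fin s)).card := Finset.card_le_univ _
  _ = s * s := by simp

/-- ones of `M` counted blockwise. -/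
lemma ones_card_le_sum :
    (onesF M).card ≤ ∑ IJ : Fin q × Fin q, (blockS M IJ.1 IJ.2).card := by
  classical
  set big : Finset ((Fin q × Fin q) × (Fin s × Fin s)) :=
    univ.filter (fun p => M (emb s q p.1.1 p.2.1) (emb s q p.1.2 p.2.2) = true) with hbig
  have h1 : (onesF M).card ≤ big.card := by
    apply Finset.card_le_card_of_surjOn
      (fun p => (emb s q p.1.1 p.2.1, emb s q p.1.2 p.2.2))
    intro p hp
    simp only [onesF, mem_coe, mem_filter, mem_univ, true_and] at hp
    have hs : 0 < s := by
      rcases Nat.eq_zero_or_pos s with h | h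
      · exact absurd (h ▸ p.1).isLt (by simp [h])
      · exact h
    obtain ⟨I, r, hIr⟩ := emb_surj hs p.1
    obtain ⟨J, c, hJc⟩ := emb_surj hs p.2
    refine Set.mem_image _ _ _ |>.mpr ⟨((I, J), (r, c)), ?_, ?_⟩
    · simp only [hbig, mem_coe, mem_filter, mem_univ, true_and]
      rw [hIr, hJc]; exact hp
    · simp [hIr, hJc]
  have h2 : big.card = ∑ IJ : Fin q × Fin q, (blockS M IJ.1 IJ.2).card := by
    rw [Finset.card_eq_sum_card_fiberwise (f := Prod.fst) (t := univ) (fun x _ => mem_univ _)]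
    apply Finset.sum_congr rfl
    intro IJ _
    apply Finset.card_bij (fun p _ => p.2)
    · intro p hp
      simp only [mem_filter, mem_univ, true_and, hbig] at hp
      simp only [blockS, mem_filter, mem_univ, true_and]
      rw [← hp.2]; exact hp.1
    · intro p hp p' hp' he
      simp only [mem_filter, hbig] at hp hp'
      exact Prod.ext (hp.2.trans hp'.2.symm) he
    · intro rc hrc
      simp only [blockS, mem_filter, mem_univ, true_and] at hrc
      exact ⟨(IJ, rc), by simp [hbig, hrc], rfl⟩
  omega

end Blocks


/-- extract a strictly monotone `Fin k`-indexed family inside a large finset. -/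
lemma exists_strictMono_into {N : ℕ} (T : Finset (Fin N)) (h : k ≤ T.card) :
    ∃ g : Fin k → Fin N, StrictMono g ∧ ∀ i, g i ∈ T := by
  obtain ⟨T', hsub, hcard⟩ := Finset.exists_subset_card_eq h
  exact ⟨T'.orderEmbOfFin hcard, (T'.orderEmbOfFin hcard).strictMono,
    fun i => hsub (T'.orderEmbOfFin_mem hcard i)⟩

section Contain

variable {s q : ℕ} {M : Fin (s * q) → Fin (s * q) → Bool}

lemma contains_of_wide_strip (J : Fin q) (S : Finset (Fin s)) (hS : S.card = k)
    (T : Finset (Fin q)) (hT : k ≤ T.card) (hall : ∀ I ∈ T, S ⊆ occC M I J) :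
    Contains π M := by
  obtain ⟨g, hg, hgT⟩ := exists_strictMono_into T hT
  set colf : Fin k → Fin s := fun i => S.orderEmbOfFin hS i with hcolf
  have hrow : ∀ i, ∃ r : Fin s, M (emb s q (g i) r) (emb s q J (colf (π i))) = true := by
    intro i
    have hmem : colf (π i) ∈ occC M (g i) J := hall (g i) (hgT i) (S.orderEmbOfFin_mem hS (π i))
    rw [occC, Finset.mem_image] at hmem
    obtain ⟨p, hp, hpe⟩ := hmem
    refine ⟨p.1, ?_⟩
    rw [← hpe]
    simpa [blockS] using hp
  choose r hr using hrow
  refine ⟨fun i => emb s q (g i) (r i), fun j => emb s q J (colf j), ?_, ?_, fun i => hr i⟩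
  · intro a b hab
    exact emb_lt_of_lt _ _ (hg hab)
  · intro a b hab
    exact emb_lt_same J ((S.orderEmbOfFin hS).strictMono hab)

lemma contains_of_tall_strip (I : Fin q) (S : Finset (Fin s)) (hS : S.card = k)
    (T : Finset (Fin q)) (hT : k ≤ T.card) (hall : ∀ J ∈ T, S ⊆ occR M I J) :
    Contains π M := by
  obtain ⟨g, hg, hgT⟩ := exists_strictMono_into T hT
  set rowf : Fin k → Fin s := fun i => S.orderEmbOfFin hS i with hrowf
  have hcol : ∀ j, ∃ c : Fin s,
      M (emb s q I (rowf (π.symm j))) (emb s q (g j) c) = true := by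
    intro j
    have hmem : rowf (π.symm j) ∈ occR M I (g j) :=
      hall (g j) (hgT j) (S.orderEmbOfFin_mem hS (π.symm j))
    rw [occR, Finset.mem_image] at hmem
    obtain ⟨p, hp, hpe⟩ := hmem
    refine ⟨p.2, ?_⟩
    rw [← hpe]
    simpa [blockS] using hp
  choose c hc using hcol
  refine ⟨fun i => emb s q I (rowf i), fun j => emb s q (g j) (c j), ?_, ?_, ?_⟩
  · intro a b hab
    exact emb_lt_same I ((S.orderEmbOfFin hS).strictMono hab)
  · intro a b hab
    exact emb_lt_of_lt _ _ (hg hab)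
  · intro i
    have := hc (π i)
    rwa [Equiv.symm_apply_apply] at this

/-- The contraction matrix: blocks which are nonempty. -/
def contr (M : Fin (s * q) → Fin (s * q) → Bool) : Fin q → Fin q → Bool :=
  fun I J => decide (blockS M I J).Nonempty

lemma contains_of_contr (h : Contains π (contr (s := s) (q := q) M)) : Contains π M := by
  obtain ⟨x, y, hx, hy, hM⟩ := h
  have hne : ∀ i, (blockS M (x i) (y (π i))).Nonempty := by
    intro i
    have := hM i
    unfold contr at this
    exact of_decide_eq_true this
  have hne' : ∀ i, ∃ p : Fin s × Fin s, p ∈ blockS M (x i) (y (π i)) := hne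
  choose p hp using hne'
  refine ⟨fun i => emb s q (x i) (p i).1, fun j => emb s q (y j) ((p (π.symm j)).2),
    ?_, ?_, ?_⟩
  · intro a b hab; exact emb_lt_of_lt _ _ (hx hab)
  · intro a b hab; exact emb_lt_of_lt _ _ (hy hab)
  · intro i
    have := hp i
    simp only [blockS, mem_filter] at this
    simp only [Equiv.symm_apply_apply]
    exact this.2

end Contain


/-- sum filter over a product decomposed per second coordinate. -/
lemma card_prod_filter {α β : Type*} [Fintype α] [Fintype β] [DecidableEq α] [DecidableEq β]
    (P : α → β → Prop) [∀ a b, Decidable (P a b)] :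
    (univ.filter fun p : α × β => P p.1 p.2).card
      = ∑ b : β, (univ.filter fun a : α => P a b).card := by
  rw [Finset.card_eq_sum_card_fiberwise (f := Prod.snd) (t := univ) (fun x _ => mem_univ _)]
  apply Finset.sum_congr rfl
  intro b _
  apply Finset.card_bij (fun p _ => p.1)
  · intro p hp
    simp only [mem_filter, mem_univ, true_and] at hp ⊢
    rw [← hp.2]; exact hp.1
  · intro p hp p' hp' he
    simp only [mem_filter] at hp hp'
    exact Prod.ext he (hp.2.trans hp'.2.symm)
  · intro a ha
    simp only [mem_filter, mem_univ, true_and] at ha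
    exact ⟨(a, b), by simp [ha], rfl⟩

section Strip

variable {s q : ℕ} {M : Fin (s * q) → Fin (s * q) → Bool}

lemma wide_strip_count (hk : 0 < k) (h : ¬ Contains π M) (J : Fin q) :
    (univ.filter fun I : Fin q => k ≤ (occC M I J).card).card ≤ (k - 1) * Nat.choose s k := by
  classical
  by_contra hcon
  push_neg at hcon
  set W := univ.filter fun I : Fin q => k ≤ (occC M I J).card with hW
  set f : Fin q → Finset (Fin s) := fun I =>
    if h' : k ≤ (occC M I J).card then (Finset.exists_subset_card_eq h').choose else ∅ with hf
  have hfspec : ∀ I ∈ W, f I ⊆ occC M I J ∧ (f I).card = k := by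
    intro I hI
    rw [hW, mem_filter] at hI
    rw [hf]
    simp only [dif_pos hI.2]
    exact (Finset.exists_subset_card_eq hI.2).choose_spec
  have hmaps : ∀ I ∈ W, f I ∈ Finset.powersetCard k (univ : Finset (Fin s)) := by
    intro I hI
    rw [Finset.mem_powersetCard]
    exact ⟨Finset.subset_univ _, (hfspec I hI).2⟩
  have hlt : (Finset.powersetCard k (univ : Finset (Fin s))).card * (k - 1) < W.card := by
    rw [Finset.card_powersetCard, Finset.card_univ, Fintype.card_fin]
    calc (Nat.choose s k) * (k - 1) = (k - 1) * Nat.choose s k := Nat.mul_comm _ _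
    _ < W.card := hcon
  obtain ⟨S, hSmem, hSfib⟩ := Finset.exists_lt_card_fiber_of_mul_lt_card_of_maps_to hmaps hlt
  rw [Finset.mem_powersetCard] at hSmem
  apply h
  apply contains_of_wide_strip π J S hSmem.2 (W.filter fun I => f I = S) (by omega)
  intro I hI
  rw [mem_filter] at hI
  calc S = f I := hI.2.symm
  _ ⊆ occC M I J := (hfspec I hI.1).1

lemma tall_strip_count (hk : 0 < k) (h : ¬ Contains π M) (I : Fin q) :
    (univ.filter fun J : Fin q => k ≤ (occR M I J).card).card ≤ (k - 1) * Nat.choose s k := by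
  classical
  by_contra hcon
  push_neg at hcon
  set W := univ.filter fun J : Fin q => k ≤ (occR M I J).card with hW
  set f : Fin q → Finset (Fin s) := fun J =>
    if h' : k ≤ (occR M I J).card then (Finset.exists_subset_card_eq h').choose else ∅ with hf
  have hfspec : ∀ J ∈ W, f J ⊆ occR M I J ∧ (f J).card = k := by
    intro J hJ
    rw [hW, mem_filter] at hJ
    rw [hf]
    simp only [dif_pos hJ.2]
    exact (Finset.exists_subset_card_eq hJ.2).choose_spec
  have hmaps : ∀ J ∈ W, f J ∈ Finset.powersetCard k (univ : Finset (Fin s)) := by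
    intro J hJ
    rw [Finset.mem_powersetCard]
    exact ⟨Finset.subset_univ _, (hfspec J hJ).2⟩
  have hlt : (Finset.powersetCard k (univ : Finset (Fin s))).card * (k - 1) < W.card := by
    rw [Finset.card_powersetCard, Finset.card_univ, Fintype.card_fin]
    calc (Nat.choose s k) * (k - 1) = (k - 1) * Nat.choose s k := Nat.mul_comm _ _
    _ < W.card := hcon
  obtain ⟨S, hSmem, hSfib⟩ := Finset.exists_lt_card_fiber_of_mul_lt_card_of_maps_to hmaps hlt
  rw [Finset.mem_powersetCard] at hSmem
  apply h
  apply contains_of_tall_strip π I S hSmem.2 (W.filter fun J => f J = S) (by omega)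
  intro J hJ
  rw [mem_filter] at hJ
  calc S = f J := hJ.2.symm
  _ ⊆ occR M I J := (hfspec J hJ.1).1

lemma ones_contr_eq :
    (onesF (contr (s := s) (q := q) M)).card
      = (univ.filter fun IJ : Fin q × Fin q => (blockS M IJ.1 IJ.2).Nonempty).card := by
  classical
  congr 1
  apply Finset.filter_congr
  intro p _
  simp [contr]

end Strip


/-- helper: sum filter over a product decomposed per first coordinate. -/
lemma card_prod_filter' {α β : Type*} [Fintype α] [Fintype β] [DecidableEq α] [DecidableEq β]
    (P : α → β → Prop) [∀ a b, Decidable (P a b)] :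
    (univ.filter fun p : α × β => P p.1 p.2).card
      = ∑ a : α, (univ.filter fun b : β => P a b).card := by
  rw [Finset.card_eq_sum_card_fiberwise (f := Prod.fst) (t := univ) (fun x _ => mem_univ _)]
  apply Finset.sum_congr rfl
  intro a _
  apply Finset.card_bij (fun p _ => p.2)
  · intro p hp
    simp only [mem_filter, mem_univ, true_and] at hp ⊢
    rw [← hp.2]; exact hp.1
  · intro p hp p' hp' he
    simp only [mem_filter] at hp hp'
    exact Prod.ext (hp.2.trans hp'.2.symm) he
  · intro b hb
    simp only [mem_filter, mem_univ, true_and] at hb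
    exact ⟨(a, b), by simp [hb], rfl⟩

/-- The Marcus–Tardos constant. -/
def cMT (k : ℕ) : ℕ :=
  2 * ((k - 1) * Nat.choose (k * k) k) * (k * k * (k * k)) + k * k * ((k - 1) * (k - 1)) + k * k

theorem extremal (hk2 : 2 ≤ k) :
    ∀ n (M : Fin n → Fin n → Bool), ¬ Contains π M → (onesF M).card ≤ cMT k * n := by
  intro n
  induction n using Nat.strong_induction_on with
  | _ n IH =>
  intro M h
  classical
  set E := (k - 1) * (k - 1) with hE
  set A := (k - 1) * Nat.choose (k * k) k with hA
  set D := 2 * A * (k * k * (k * k)) with hD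
  have hc_def : cMT k = D + k * k * E + k * k := rfl
  set c := cMT k with hc
  by_cases hn : n ≤ c
  · calc (onesF M).card ≤ (univ : Finset (Fin n × Fin n)).card := Finset.card_le_univ _
    _ = n * n := by simp
    _ ≤ c * n := Nat.mul_le_mul_right n hn
  push_neg at hn
  have hk0 : 0 < k := by omega
  have hs4 : 4 ≤ k * k := by nlinarith
  have hsc : k * k ≤ c := by omega
  set s := k * k with hs
  set q := n / s + 1 with hq
  have hsq : s * q = s * (n / s) + s := by rw [hq, Nat.mul_add, Nat.mul_one]
  have hdm := Nat.div_add_mod n s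
  have hmod : n % s < s := Nat.mod_lt _ (by omega)
  have hnN : n ≤ s * q := by omega
  have hsqn : s * q ≤ n + s := by omega
  have hqn : q < n := by
    have h4 : n / s ≤ n / 4 := Nat.div_le_div_left hs4 (by norm_num)
    omega
  -- the padded matrix
  set M' : Fin (s * q) → Fin (s * q) → Bool := fun i j =>
    if hij : (i : ℕ) < n ∧ (j : ℕ) < n then M ⟨i, hij.1⟩ ⟨j, hij.2⟩ else false with hM'
  have h' : ¬ Contains π M' := by
    rintro ⟨x, y, hx, hy, hMc⟩
    have hlt : ∀ i, (x i : ℕ) < n ∧ (y (π i) : ℕ) < n := by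
      intro i
      by_contra hcon
      have := hMc i
      simp only [hM'] at this
      rw [dif_neg hcon] at this
      simp at this
    have hyn : ∀ j, (y j : ℕ) < n := by
      intro j
      have := (hlt (π.symm j)).2
      rwa [Equiv.apply_symm_apply] at this
    refine h ⟨fun i => ⟨x i, (hlt i).1⟩, fun j => ⟨y j, hyn j⟩, ?_, ?_, ?_⟩
    · intro a b hab
      exact hx hab
    · intro a b hab
      exact hy hab
    · intro i
      have := hMc i
      simp only [hM'] at this
      rwa [dif_pos ⟨(hlt i).1, (hlt i).2⟩] at this
  have hones : (onesF M).card ≤ (onesF M').card := by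
    apply Finset.card_le_card_of_injOn
      (fun p => (Fin.castLE hnN p.1, Fin.castLE hnN p.2))
    · intro p hp
      simp only [onesF, mem_coe, mem_filter, mem_univ, true_and] at hp ⊢
      have h1 : ((Fin.castLE hnN p.1 : Fin (s * q)) : ℕ) < n := p.1.isLt
      have h2 : ((Fin.castLE hnN p.2 : Fin (s * q)) : ℕ) < n := p.2.isLt
      simp only [hM']
      rw [dif_pos ⟨h1, h2⟩]
      convert hp using 2 <;> rfl
    · intro p _ p' _ he
      simp only [Prod.mk.injEq] at he
      have e1 : p.1 = p'.1 := Fin.castLE_injective hnN he.1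
      have e2 : p.2 = p'.2 := Fin.castLE_injective hnN he.2
      exact Prod.ext e1 e2
  -- blockwise bound
  have hblock : ∀ IJ : Fin q × Fin q, (blockS M' IJ.1 IJ.2).card ≤
      (if k ≤ (occC M' IJ.1 IJ.2).card ∨ k ≤ (occR M' IJ.1 IJ.2).card then s * s else 0)
      + (if (blockS M' IJ.1 IJ.2).Nonempty then E else 0) := by
    intro IJ
    by_cases hwt : k ≤ (occC M' IJ.1 IJ.2).card ∨ k ≤ (occR M' IJ.1 IJ.2).card
    · rw [if_pos hwt]
      have h1 := blockS_card_le' M' IJ.1 IJ.2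
      split_ifs <;> omega
    · rw [if_neg hwt]
      push_neg at hwt
      by_cases hne : (blockS M' IJ.1 IJ.2).Nonempty
      · rw [if_pos hne]
        have h1 := blockS_card_le M' IJ.1 IJ.2
        have h2 : (occR M' IJ.1 IJ.2).card * (occC M' IJ.1 IJ.2).card ≤ E := by
          rw [hE]
          exact Nat.mul_le_mul (by omega) (by omega)
        omega
      · rw [if_neg hne]
        rw [Finset.not_nonempty_iff_eq_empty] at hne
        simp [hne]
  have hsum : (onesF M').card ≤
      (univ.filter fun IJ : Fin q × Fin q =>
        k ≤ (occC M' IJ.1 IJ.2).card ∨ k ≤ (occR M' IJ.1 IJ.2).card).card * (s * s)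
      + (univ.filter fun IJ : Fin q × Fin q => (blockS M' IJ.1 IJ.2).Nonempty).card * E := by
    calc (onesF M').card ≤ ∑ IJ : Fin q × Fin q, (blockS M' IJ.1 IJ.2).card :=
          ones_card_le_sum M'
    _ ≤ ∑ IJ : Fin q × Fin q,
          ((if k ≤ (occC M' IJ.1 IJ.2).card ∨ k ≤ (occR M' IJ.1 IJ.2).card then s * s else 0)
            + (if (blockS M' IJ.1 IJ.2).Nonempty then E else 0)) :=
          Finset.sum_le_sum (fun IJ _ => hblock IJ)
    _ = _ := by
          rw [Finset.sum_add_distrib, ← Finset.sum_filter, ← Finset.sum_filter,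
            Finset.sum_const, Finset.sum_const, smul_eq_mul, smul_eq_mul]
  have hwide : (univ.filter fun IJ : Fin q × Fin q =>
      k ≤ (occC M' IJ.1 IJ.2).card ∨ k ≤ (occR M' IJ.1 IJ.2).card).card ≤ q * A + q * A := by
    calc _ ≤ (univ.filter fun IJ : Fin q × Fin q => k ≤ (occC M' IJ.1 IJ.2).card).card
          + (univ.filter fun IJ : Fin q × Fin q => k ≤ (occR M' IJ.1 IJ.2).card).card := by
          rw [Finset.filter_or]
          exact Finset.card_union_le _ _
    _ ≤ q * A + q * A := by
          apply Nat.add_le_add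
          · rw [card_prod_filter (fun I J => k ≤ (occC M' I J).card)]
            calc _ ≤ ∑ _J : Fin q, A :=
                  Finset.sum_le_sum (fun J _ => wide_strip_count π hk0 h' J)
            _ = q * A := by simp [Finset.sum_const, mul_comm]
          · rw [card_prod_filter' (fun I J => k ≤ (occR M' I J).card)]
            calc _ ≤ ∑ _I : Fin q, A :=
                  Finset.sum_le_sum (fun I _ => tall_strip_count π hk0 h' I)
            _ = q * A := by simp [Finset.sum_const, mul_comm]
  have hNe : (univ.filter fun IJ : Fin q × Fin q => (blockS M' IJ.1 IJ.2).Nonempty).card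
      ≤ c * q := by
    rw [← ones_contr_eq]
    exact IH q hqn (contr M') (fun hcontain => h' (contains_of_contr π hcontain))
  -- arithmetic
  have t1 : n * D ≤ c * n := by
    calc n * D ≤ n * c := Nat.mul_le_mul_left n (by omega)
    _ = c * n := Nat.mul_comm n c
  have t2 : s * D ≤ c * n := by
    calc s * D ≤ n * c := Nat.mul_le_mul (show s ≤ n by omega) (show D ≤ c by omega)
    _ = c * n := Nat.mul_comm n c
  have t3 : s * (c * E) ≤ c * n := by
    calc s * (c * E) = (s * E) * c := by ring
    _ ≤ n * c := Nat.mul_le_mul_right c (by omega)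
    _ = c * n := Nat.mul_comm n c
  have hEs : E + 3 ≤ s := by
    obtain ⟨m, hm⟩ : ∃ m, k = m + 2 := ⟨k - 2, by omega⟩
    have e1 : E = (m + 1) * (m + 1) := by rw [hE]; congr 1 <;> omega
    have e2 : s = (m + 2) * (m + 2) := by rw [hs, hm]
    rw [e1, e2]
    nlinarith
  have key : (n + s) * (D + c * E) ≤ c * n * s := by
    calc (n + s) * (D + c * E) = n * D + s * D + s * (c * E) + c * n * E := by ring
    _ ≤ c * n + c * n + c * n + c * n * E := by
        have t4 : c * n * E ≤ c * n * E := le_refl _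
        exact Nat.add_le_add (Nat.add_le_add (Nat.add_le_add t1 t2) t3) t4
    _ = c * n * (3 + E) := by ring
    _ ≤ c * n * s := Nat.mul_le_mul_left _ (by omega)
  have harith : q * D + c * q * E ≤ c * n := by
    have hfin : s * (q * D + c * q * E) ≤ s * (c * n) := by
      calc s * (q * D + c * q * E) = (s * q) * (D + c * E) := by ring
      _ ≤ (n + s) * (D + c * E) := Nat.mul_le_mul_right _ hsqn
      _ ≤ c * n * s := key
      _ = s * (c * n) := by ring
    exact Nat.le_of_mul_le_mul_left hfin (by omega)
  calc (onesF M).card ≤ (onesF M').card := hones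
  _ ≤ (q * A + q * A) * (s * s) + (c * q) * E := by
      refine hsum.trans (Nat.add_le_add ?_ ?_)
      · exact Nat.mul_le_mul_right _ hwide
      · exact Nat.mul_le_mul_right _ hNe
  _ = q * D + c * q * E := by rw [hD]; ring
  _ ≤ c * n := harith


/-- Existence of a linear extremal bound, for every `k ≥ 1`. -/
lemma exists_extremal (hk : 0 < k) :
    ∃ c : ℕ, ∀ n (M : Fin n → Fin n → Bool), ¬ Contains π M → (onesF M).card ≤ c * n := by
  rcases eq_or_lt_of_le (Nat.succ_le_of_lt hk) with h1 | h2
  · -- k = 1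
    refine ⟨0, fun n M h => ?_⟩
    rw [Nat.zero_mul, Nat.le_zero, Finset.card_eq_zero]
    by_contra hne
    obtain ⟨p, hp⟩ := Finset.nonempty_of_ne_empty hne
    simp only [onesF, mem_filter, mem_univ, true_and] at hp
    have : Subsingleton (Fin k) := by rw [← h1]; exact Fin.subsingleton_one
    refine h ⟨fun _ => p.1, fun _ => p.2, Subsingleton.strictMono _, Subsingleton.strictMono _,
      fun i => hp⟩
  · exact ⟨cMT k, extremal π h2⟩

/-- Supersaturation: each extra one beyond the linear bound yields an extra copy. -/
lemma supersat (hk : 0 < k) (c : ℕ)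
    (hc : ∀ n (M : Fin n → Fin n → Bool), ¬ Contains π M → (onesF M).card ≤ c * n) :
    ∀ t n (M : Fin n → Fin n → Bool), (onesF M).card = t → t ≤ matCopies π M + c * n := by
  intro t
  induction t using Nat.strong_induction_on with
  | _ t IH =>
  intro n M hM
  by_cases hcon : Contains π M
  · obtain ⟨x, y, hx, hy, hMc⟩ := hcon
    set i0 : Fin k := ⟨0, hk⟩ with hi0
    set a := x i0 with ha
    set b := y (π i0) with hb
    have hab : M a b = true := hMc i0
    set M' : Fin n → Fin n → Bool := fun u v => if u = a ∧ v = b then false else M u v with hM'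
    have hweak : ∀ u v, M' u v = true → M u v = true := by
      intro u v huv
      rw [hM'] at huv
      simp only at huv
      by_cases hc' : u = a ∧ v = b
      · rw [if_pos hc'] at huv; exact absurd huv (by simp)
      · rwa [if_neg hc'] at huv
    have hones' : onesF M' = (onesF M).erase (a, b) := by
      ext p
      simp only [onesF, Finset.mem_erase, mem_filter, mem_univ, true_and, hM']
      constructor
      · intro hp
        by_cases hc' : p.1 = a ∧ p.2 = b
        · rw [if_pos hc'] at hp; exact absurd hp (by simp)
        · rw [if_neg hc'] at hp
          refine ⟨?_, hp⟩
          intro he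
          exact hc' ⟨by rw [he], by rw [he]⟩
      · rintro ⟨hne, hp⟩
        rw [if_neg ?_]
        · exact hp
        · rintro ⟨h1, h2⟩
          exact hne (Prod.ext h1 h2)
    have habm : (a, b) ∈ onesF M := by
      simp only [onesF, mem_filter, mem_univ, true_and]
      exact hab
    have hcard' : (onesF M').card = t - 1 := by
      rw [hones', Finset.card_erase_of_mem habm, hM]
    have ht1 : 1 ≤ t := by
      rw [← hM]
      exact Finset.card_pos.mpr ⟨_, habm⟩
    -- one more copy in M than in M'
    have hcopy : matCopies π M' + 1 ≤ matCopies π M := by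
      classical
      set P : (Fin k → Fin n) × (Fin k → Fin n) → Prop := fun xy =>
        StrictMono xy.1 ∧ StrictMono xy.2 ∧ ∀ i, M (xy.1 i) (xy.2 (π i)) = true with hP
      set P' : (Fin k → Fin n) × (Fin k → Fin n) → Prop := fun xy =>
        StrictMono xy.1 ∧ StrictMono xy.2 ∧ ∀ i, M' (xy.1 i) (xy.2 (π i)) = true with hP'
      have hxy : P (x, y) := ⟨hx, hy, hMc⟩
      have hxy' : ¬ P' (x, y) := by
        rintro ⟨-, -, hall⟩
        have := hall i0
        simp [hM', ha, hb] at this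
      have hinj : Function.Injective
          (Sum.elim (fun z : {xy // P' xy} => (⟨z.1, z.2.1, z.2.2.1,
              fun i => hweak _ _ (z.2.2.2 i)⟩ : {xy // P xy}))
            (fun _ : PUnit.{1} => (⟨(x, y), hxy⟩ : {xy // P xy}))) := by
        rintro (z | z) (w | w) he
        · simp only [Sum.elim_inl, Subtype.mk.injEq] at he
          exact congrArg Sum.inl (Subtype.ext he)
        · simp only [Sum.elim_inl, Sum.elim_inr, Subtype.mk.injEq] at he
          exact absurd (he ▸ z.2) hxy'
        · simp only [Sum.elim_inl, Sum.elim_inr, Subtype.mk.injEq] at he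
          exact absurd (he ▸ w.2) hxy'
        · exact congrArg Sum.inr rfl
      have := Nat.card_le_card_of_injective _ hinj
      rw [Nat.card_sum] at this
      simpa [matCopies, hP, hP', Nat.card_eq_fintype_card] using this
    have := IH (t - 1) (by omega) n M' hcard'
    omega
  · rw [← hM]
    have := hc n M hcon
    omega

end WeakSup

theorem weak_supersaturation (k : ℕ) (hk : 0 < k) (π : Equiv.Perm (Fin k)) :
    ∃ c : ℝ, ∀ (n m : ℕ) (M : Fin n → Fin n → Bool), matOnes M = m →
      (m : ℝ) - c * n ≤ (matCopies π M : ℝ) := by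
  obtain ⟨c, hc⟩ := WeakSup.exists_extremal π hk
  refine ⟨(c : ℝ), fun n m M hm => ?_⟩
  have key : m ≤ matCopies π M + c * n := by
    rw [← hm, WeakSup.matOnes_eq]
    exact WeakSup.supersat π hk c hc _ n M rfl
  have : (m : ℝ) ≤ (matCopies π M : ℝ) + (c : ℝ) * n := by exact_mod_cast key
  linarith
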